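/- In a graph G = (V,E) on a vertex set C of size |C| ≥ 2 in which every vertex x ∈ C has at least |C|/2 neighbors within C, for every proper nonempty subset X ⊂ C, the number of edges between X and C \ X is at least |C|/2. -/
import Mathlib

lemma bdry_sum {V : Type*} [DecidableEq V] (G : SimpleGraph V) [DecidableRel G.Adj]
    (X B : Finset V) :
    ((X ×ˢ B).filter (fun p => G.Adj p.1 p.2)).card
      = ∑ x ∈ X, (B.filter (fun y => G.Adj x y)).card := by
  have h : (X ×ˢ B).filter (fun p => G.Adj p.1 p.2)
      = X.biUnion (fun x => (B.filter (fun y => G.Adj x y)).image (fun y => (x, y))) := by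
    ext ⟨a, b⟩
    simp only [Finset.mem_filter, Finset.mem_product, Finset.mem_biUnion, Finset.mem_image,
      Prod.mk.injEq]
    constructor
    · rintro ⟨⟨hA, hB⟩, hadj⟩
      exact ⟨a, hA, b, ⟨hB, hadj⟩, rfl, rfl⟩
    · rintro ⟨x, hx, y, ⟨hy, hadj⟩, rfl, rfl⟩
      exact ⟨⟨hx, hy⟩, hadj⟩
  rw [h, Finset.card_biUnion]
  · refine Finset.sum_congr rfl (fun x _ => ?_)
    exact Finset.card_image_of_injective _ (fun a b h => by simpa using h)
  · intro x _ y _ hxy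
    simp only [Finset.disjoint_left]
    intro p hp hq
    simp only [Finset.mem_image] at hp hq
    obtain ⟨a, _, rfl⟩ := hp
    obtain ⟨b, _, hb⟩ := hq
    simp only [Prod.mk.injEq] at hb
    exact (hxy hb.1.symm).elim

lemma bdry_half {V : Type*} [DecidableEq V] (G : SimpleGraph V) [DecidableRel G.Adj]
    (C : Finset V)
    (hdeg : ∀ x ∈ C, ((C.card : ℝ) / 2 ≤ ((C.filter (fun y => G.Adj x y)).card : ℝ)))
    (X : Finset V) (hsub : X ⊆ C) (hne : X.Nonempty)
    (hhalf : (X.card : ℝ) ≤ (C.card : ℝ) / 2) :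
    (C.card : ℝ) / 2 ≤ (((X ×ˢ (C \ X)).filter (fun p => G.Adj p.1 p.2)).card : ℝ) := by
  have key : ∀ x ∈ X, ((C.card : ℝ) / 2 - (X.card : ℝ) + 1)
      ≤ (((C \ X).filter (fun y => G.Adj x y)).card : ℝ) := by
    intro x hx
    have hsplit : (C.filter (fun y => G.Adj x y)).card
        = (X.filter (fun y => G.Adj x y)).card + ((C \ X).filter (fun y => G.Adj x y)).card := by
      rw [← Finset.card_union_of_disjoint, ← Finset.filter_union,
        Finset.union_sdiff_of_subset hsub]
      exact Finset.disjoint_filter_filter (Finset.disjoint_sdiff)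
    have hXn : (X.filter (fun y => G.Adj x y)).card ≤ X.card - 1 := by
      have hsub2 : X.filter (fun y => G.Adj x y) ⊆ X.erase x := by
        intro y hy
        simp only [Finset.mem_filter] at hy
        exact Finset.mem_erase.2 ⟨fun h => G.irrefl (h ▸ hy.2), hy.1⟩
      calc (X.filter (fun y => G.Adj x y)).card ≤ (X.erase x).card := Finset.card_le_card hsub2
        _ = X.card - 1 := Finset.card_erase_of_mem hx
    have h1 : 1 ≤ X.card := Finset.card_pos.2 ⟨x, hx⟩
    have hXr : ((X.filter (fun y => G.Adj x y)).card : ℝ) ≤ (X.card : ℝ) - 1 := by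
      have h2 := (Nat.cast_le (α := ℝ)).2 hXn
      rwa [Nat.cast_sub h1, Nat.cast_one] at h2
    have hd := hdeg x (hsub hx)
    have : ((C.filter (fun y => G.Adj x y)).card : ℝ)
        = ((X.filter (fun y => G.Adj x y)).card : ℝ) + (((C \ X).filter (fun y => G.Adj x y)).card : ℝ) := by
      exact_mod_cast hsplit
    linarith
  have hsum := bdry_sum G X (C \ X)
  have hsumR : (X.card : ℝ) * ((C.card : ℝ) / 2 - (X.card : ℝ) + 1)
      ≤ (((X ×ˢ (C \ X)).filter (fun p => G.Adj p.1 p.2)).card : ℝ) := by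
    rw [hsum]
    push_cast
    calc (X.card : ℝ) * ((C.card : ℝ) / 2 - (X.card : ℝ) + 1)
        = ∑ _x ∈ X, ((C.card : ℝ) / 2 - (X.card : ℝ) + 1) := by
          rw [Finset.sum_const, nsmul_eq_mul]
      _ ≤ ∑ x ∈ X, (((C \ X).filter (fun y => G.Adj x y)).card : ℝ) :=
          Finset.sum_le_sum key
  have h1 : (1 : ℝ) ≤ (X.card : ℝ) := by exact_mod_cast Finset.card_pos.2 hne
  nlinarith [hsumR, h1, hhalf]

theorem boundary_ge_half {V : Type*} [DecidableEq V] (G : SimpleGraph V) [DecidableRel G.Adj]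
    (C : Finset V) (hC : 2 ≤ C.card)
    (hdeg : ∀ x ∈ C, ((C.card : ℝ) / 2 ≤ ((C.filter (fun y => G.Adj x y)).card : ℝ)))
    (Xs : Finset V) (hsub : Xs ⊆ C) (hne : Xs.Nonempty) (hprop : Xs ≠ C) :
    (C.card : ℝ) / 2 ≤ (((Xs ×ˢ (C \ Xs)).filter (fun p => G.Adj p.1 p.2)).card : ℝ) := by
  by_cases h : (Xs.card : ℝ) ≤ (C.card : ℝ) / 2
  · exact bdry_half G C hdeg Xs hsub hne h
  · set Y := C \ Xs with hY
    have hYsub : Y ⊆ C := Finset.sdiff_subset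
    have hYne : Y.Nonempty := by
      rw [hY]
      exact Finset.sdiff_nonempty.2 (fun hc => hprop (Finset.Subset.antisymm hsub hc))
    have hYcard : Y.card = C.card - Xs.card := Finset.card_sdiff_of_subset hsub
    have hXle : Xs.card ≤ C.card := Finset.card_le_card hsub
    have hYr : (Y.card : ℝ) = (C.card : ℝ) - (Xs.card : ℝ) := by
      rw [hYcard]; push_cast [hXle]; ring
    have hYhalf : (Y.card : ℝ) ≤ (C.card : ℝ) / 2 := by linarith
    have hCY : C \ Y = Xs := by
      rw [hY]
      ext a
      simp only [Finset.mem_sdiff, not_and, not_not]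
      exact ⟨fun ⟨haC, hn⟩ => hn haC, fun hx => ⟨hsub hx, fun _ => hx⟩⟩
    have := bdry_half G C hdeg Y hYsub hYne hYhalf
    rw [hCY] at this
    have hswap : ((Y ×ˢ Xs).filter (fun p => G.Adj p.1 p.2)).card
        = ((Xs ×ˢ Y).filter (fun p => G.Adj p.1 p.2)).card := by
      apply Finset.card_bij (fun p _ => (p.2, p.1))
      · intro p hp
        simp only [Finset.mem_filter, Finset.mem_product] at hp ⊢
        exact ⟨⟨hp.1.2, hp.1.1⟩, hp.2.symm⟩
      · intro p hp q hq h
        cases p; cases q; simpa [Prod.ext_iff, and_comm] using h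
      · intro p hp
        simp only [Finset.mem_filter, Finset.mem_product] at hp
        exact ⟨(p.2, p.1), by simp [Finset.mem_filter, Finset.mem_product, hp.1.1, hp.1.2, hp.2.symm], rfl⟩
    rw [hswap] at this
    exact this
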